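/- arXiv:1905.07365 — 2 statements merged into one kernel-verified Lean document; each statement's English description precedes it below -/
import Mathlib

section
/- Let 𝒟 be an abstract domain and u a minterm over P^𝒟. If u is not 2-reduced, then ⟦u⟧ = ∅. Consequently, for every set S of minterms, ⟦S⟧ = ⟦{u ∈ S : u is 2-reduced}⟧. -/
/-- A bound `(k, ≺)`: an integer `k` together with a strictness flag
(`true` codes `≤`, `false` codes `<`), ordered lexicographically,
so that `(k, <) < (k, ≤) < (k+1, <)`. -/
abbrev Bnd : Type := Lex (ℤ × Bool)

/-- Addition of bounds: `(k,≺) + (k',≺')` is `(k+k', ≺'')` where `≺''` is `≤`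
iff both `≺` and `≺'` are `≤`. -/
instance : Add Bnd :=
  ⟨fun a b => toLex ((ofLex a).1 + (ofLex b).1, (ofLex a).2 && (ofLex b).2)⟩

/-- The zero bound is `(0, ≤)`. -/
instance : Zero Bnd := ⟨toLex (0, true)⟩

instance : AddCommMonoid Bnd where
  add a b := toLex ((ofLex a).1 + (ofLex b).1, (ofLex a).2 && (ofLex b).2)
  zero := toLex (0, true)
  nsmul := nsmulRec
  add_assoc a b c := by
    change toLex (((ofLex a).1 + (ofLex b).1) + (ofLex c).1,
        (((ofLex a).2 && (ofLex b).2) && (ofLex c).2)) =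
      toLex ((ofLex a).1 + ((ofLex b).1 + (ofLex c).1),
        ((ofLex a).2 && ((ofLex b).2 && (ofLex c).2)))
    rw [add_assoc, Bool.and_assoc]
  zero_add a := by
    change toLex ((0 : ℤ) + (ofLex a).1, (true && (ofLex a).2)) = a
    simp
  add_zero a := by
    change toLex ((ofLex a).1 + (0 : ℤ), ((ofLex a).2 && true)) = a
    simp
  add_comm a b := by
    change toLex ((ofLex a).1 + (ofLex b).1, ((ofLex a).2 && (ofLex b).2)) =
      toLex ((ofLex b).1 + (ofLex a).1, ((ofLex b).2 && (ofLex a).2))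
    rw [add_comm, Bool.and_comm]

/-- `satB d b` says that `d ≺ k`, where `b = (k, ≺)`. -/
def satB (d : ℝ) (b : Bnd) : Prop :=
  if (ofLex b).2 then d ≤ ((ofLex b).1 : ℝ) else d < ((ofLex b).1 : ℝ)


/-- The inverse of a bound: the inverse of `(k, ≺)` is `(−k, ≺⁻¹)`, where
`≤⁻¹ = <` and `<⁻¹ = ≤`. -/
def bndInv (b : Bnd) : Bnd := toLex (-(ofLex b).1, !(ofLex b).2)

variable {C : Type*}

/-- Extended valuation on `C0 = C ∪ {0}`: the special clock `0` is `none`. -/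
def val0 (v : C → ℝ) : Option C → ℝ := fun x => x.elim 0 v

/-- An abstract domain assigns a finite set of bounds to each ordered pair of
clocks in `C0 = C ∪ {0}`. -/
abbrev AbsDom (C : Type*) := Option C → Option C → Finset Bnd

/-- The symmetry requirement on abstract domains:
`𝒟_{y,x} = {(−k, ≺⁻¹) : (k, ≺) ∈ 𝒟_{x,y}}`. -/
def DomSym (𝒟 : AbsDom C) : Prop := ∀ x y, 𝒟 y x = (𝒟 x y).image bndInv

variable [LinearOrder (Option C)]

/-- The predicate set `P^𝒟`: one variable `p_{x−y≺k}` for each pair `x ⊏ y`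
(in the fixed total order on `C0`) and each bound `(k, ≺) ∈ 𝒟_{x,y}`. -/
abbrev Pred (𝒟 : AbsDom C) :=
  {p : Option C × Option C × Bnd // p.1 < p.2.1 ∧ p.2.2 ∈ 𝒟 p.1 p.2.1}

/-- A minterm: a Boolean valuation of the predicate set. -/
abbrev Minterm (𝒟 : AbsDom C) := Pred 𝒟 → Bool

/-- The semantics of a minterm: the set of (nonnegative) clock valuations
satisfying exactly the constraints prescribed by the minterm. -/
def mtSem (𝒟 : AbsDom C) (u : Minterm 𝒟) : Set (C → ℝ) :=
  {v | (∀ c, 0 ≤ v c) ∧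
    ∀ p : Pred 𝒟, (satB (val0 v p.1.1 - val0 v p.1.2.1) p.1.2.2 ↔ u p = true)}

/-- The semantics of a set of minterms. -/
def setSem (𝒟 : AbsDom C) (S : Set (Minterm 𝒟)) : Set (C → ℝ) :=
  ⋃ u ∈ S, mtSem 𝒟 u

/-- The abstraction function `α_𝒟` maps a set `Z` of valuations to the set of
minterms whose semantics meets `Z`. -/
def absF (𝒟 : AbsDom C) (Z : Set (C → ℝ)) : Set (Minterm 𝒟) :=
  {u | (mtSem 𝒟 u ∩ Z).Nonempty}

/-- The literal value `u⟦x−y≺k⟧`: the value of the predicate `p_{x−y≺k}` if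
`x ⊏ y`, and the negation of the value of `p_{y−x≺⁻¹−k}` if `y ⊏ x`
(if `x = y` the literal is the truth value of the constraint `0 ≺ k`). -/
def litVal (𝒟 : AbsDom C) (u : Minterm 𝒟) (x y : Option C) (b : Bnd) : Bool :=
  if h : x < y ∧ b ∈ 𝒟 x y then u ⟨(x, y, b), h⟩
  else if h : y < x ∧ bndInv b ∈ 𝒟 y x then !(u ⟨(y, x, bndInv b), h⟩)
  else decide ((0 : Bnd) ≤ b)

/-- A minterm is 2-reduced if no contradiction can be obtained from it via
paths of length at most 2: any constraint implied by a single stronger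
asserted constraint, or by the sum of two asserted constraints, is asserted. -/
def TwoReduced (𝒟 : AbsDom C) (u : Minterm 𝒟) : Prop :=
  ∀ x y : Option C, ∀ b ∈ 𝒟 x y,
    ((∃ b' ∈ 𝒟 x y, b' ≤ b ∧ litVal 𝒟 u x y b' = true) ∨
      (∃ z : Option C, ∃ b₁ ∈ 𝒟 x z, ∃ b₂ ∈ 𝒟 z y,
        b₁ + b₂ ≤ b ∧ litVal 𝒟 u x z b₁ = true ∧ litVal 𝒟 u z y b₂ = true)) →
    litVal 𝒟 u x y b = true

lemma satB_mono {d : ℝ} {b b' : Bnd} (h : b' ≤ b) (hs : satB d b') : satB d b := by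
  obtain ⟨k', s'⟩ := b'
  obtain ⟨k, s⟩ := b
  replace h : k' < k ∨ k' = k ∧ s' ≤ s := Prod.Lex.le_iff.mp h
  replace hs : if s' then d ≤ (k' : ℝ) else d < (k' : ℝ) := hs
  show if s then d ≤ (k : ℝ) else d < (k : ℝ)
  rcases h with h | ⟨rfl, hb⟩
  · cases s' <;> cases s <;> simp_all <;>
      linarith [show (k' : ℝ) < k from by exact_mod_cast h]
  · cases s' <;> cases s <;> simp_all <;>
      first
      | linarith
      | exact absurd hb (by decide)

lemma satB_add {d₁ d₂ : ℝ} {b₁ b₂ : Bnd} (h₁ : satB d₁ b₁) (h₂ : satB d₂ b₂) :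
    satB (d₁ + d₂) (b₁ + b₂) := by
  obtain ⟨k₁, s₁⟩ := b₁
  obtain ⟨k₂, s₂⟩ := b₂
  replace h₁ : if s₁ then d₁ ≤ (k₁ : ℝ) else d₁ < (k₁ : ℝ) := h₁
  replace h₂ : if s₂ then d₂ ≤ (k₂ : ℝ) else d₂ < (k₂ : ℝ) := h₂
  show if (s₁ && s₂) then d₁ + d₂ ≤ ((k₁ + k₂ : ℤ) : ℝ) else d₁ + d₂ < ((k₁ + k₂ : ℤ) : ℝ)
  cases s₁ <;> cases s₂ <;> simp_all <;> linarith

lemma satB_zero_iff {b : Bnd} : satB 0 b ↔ (0 : Bnd) ≤ b := by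
  obtain ⟨k, s⟩ := b
  have hle : ((0 : Bnd) ≤ toLex (k, s)) ↔ (0 < k ∨ 0 = k ∧ true ≤ s) :=
    Prod.Lex.le_iff
  rw [show ((0:Bnd) ≤ (k,s)) = ((0:Bnd) ≤ toLex (k,s)) from rfl, hle]
  show (if s then (0:ℝ) ≤ (k : ℝ) else (0:ℝ) < (k : ℝ)) ↔ _
  cases s <;> simp
  constructor
  · intro h
    have : (0:ℤ) ≤ k := by exact_mod_cast h
    omega
  · intro h
    have : (0:ℤ) ≤ k := by omega
    exact_mod_cast this

lemma satB_neg {d : ℝ} {b : Bnd} : satB (-d) (bndInv b) ↔ ¬ satB d b := by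
  obtain ⟨k, s⟩ := b
  show (if !s then -d ≤ ((-k : ℤ) : ℝ) else -d < ((-k : ℤ) : ℝ)) ↔
    ¬ (if s then d ≤ (k : ℝ) else d < (k : ℝ))
  cases s <;> simp

lemma lit_sem {C : Type*} [LinearOrder (Option C)] (𝒟 : AbsDom C) (hsym : DomSym 𝒟)
    (u : Minterm 𝒟) (v : C → ℝ) (hv : v ∈ mtSem 𝒟 u) (x y : Option C) (b : Bnd)
    (hb : b ∈ 𝒟 x y) :
    (litVal 𝒟 u x y b = true ↔ satB (val0 v x - val0 v y) b) := by
  unfold litVal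
  rcases lt_trichotomy x y with h | h | h
  · rw [dif_pos ⟨h, hb⟩]
    exact (hv.2 ⟨(x, y, b), ⟨h, hb⟩⟩).symm
  · subst h
    rw [dif_neg (fun hc => lt_irrefl x hc.1), dif_neg (fun hc => lt_irrefl x hc.1)]
    rw [sub_self]
    simp [satB_zero_iff]
  · have hinv : bndInv b ∈ 𝒟 y x := by
      rw [hsym x y]; exact Finset.mem_image_of_mem _ hb
    rw [dif_neg (fun hc => absurd hc.1 (not_lt_of_gt h)), dif_pos ⟨h, hinv⟩]
    have := hv.2 ⟨(y, x, bndInv b), ⟨h, hinv⟩⟩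
    have hneg : satB (val0 v y - val0 v x) (bndInv b) ↔
        ¬ satB (val0 v x - val0 v y) b := by
      rw [← neg_sub (val0 v x) (val0 v y)]; exact satB_neg
    dsimp at this
    rw [hneg] at this
    simp only [Bool.not_eq_true']
    constructor
    · intro hfalse
      by_contra hns
      exact absurd hfalse (by rw [← Bool.not_eq_true, ← this]; exact fun h' => h' hns)
    · intro hs
      by_contra hne
      exact (this.mpr (by simpa using hne)) hs

/-- If a minterm is not 2-reduced then its semantics is empty; consequently the
semantics of a set of minterms equals the semantics of its 2-reduced part. -/
theorem not_two_reduced_semantics_empty {C : Type*} [LinearOrder (Option C)]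
    (𝒟 : AbsDom C) (hsym : DomSym 𝒟) :
    (∀ u : Minterm 𝒟, ¬ TwoReduced 𝒟 u → mtSem 𝒟 u = ∅) ∧
      ∀ S : Set (Minterm 𝒟), setSem 𝒟 S = setSem 𝒟 {u ∈ S | TwoReduced 𝒟 u} := by
  have key : ∀ u : Minterm 𝒟, ∀ v ∈ mtSem 𝒟 u, TwoReduced 𝒟 u := by
    intro u v hv x y b hb hyp
    rw [lit_sem 𝒟 hsym u v hv x y b hb]
    rcases hyp with ⟨b', hb', hle, hlit⟩ | ⟨z, b₁, hb₁, b₂, hb₂, hle, h₁, h₂⟩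
    · exact satB_mono hle ((lit_sem 𝒟 hsym u v hv x y b' hb').mp hlit)
    · have hs := satB_add ((lit_sem 𝒟 hsym u v hv x z b₁ hb₁).mp h₁)
        ((lit_sem 𝒟 hsym u v hv z y b₂ hb₂).mp h₂)
      rw [sub_add_sub_cancel] at hs
      exact satB_mono hle hs
  have h1 : ∀ u : Minterm 𝒟, ¬ TwoReduced 𝒟 u → mtSem 𝒟 u = ∅ := by
    intro u hnr
    rw [Set.eq_empty_iff_forall_notMem]
    intro v hv
    exact hnr (key u v hv)
  refine ⟨h1, fun S => ?_⟩
  apply Set.eq_of_subset_of_subset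
  · intro v hv
    rw [setSem, Set.mem_iUnion₂] at hv ⊢
    obtain ⟨u, hu, hvu⟩ := hv
    exact ⟨u, ⟨hu, key u v hvu⟩, hvu⟩
  · intro v hv
    rw [setSem, Set.mem_iUnion₂] at hv ⊢
    obtain ⟨u, hu, hvu⟩ := hv
    exact ⟨u, hu.1, hvu⟩
end

section
/- Let 𝒟 be an abstract domain. Define the relation S_Up on minterms by: (u,w) ∈ S_Up iff (i) for every x ∈ C and (k,≺) ∈ 𝒟_{x,0}, if u⟦x−0≺k⟧ = false then w⟦x−0≺k⟧ = false; (ii) for every y ∈ C and (k,≺) ∈ 𝒟_{0,y}, if u⟦0−y≺k⟧ = true then w⟦0−y≺k⟧ = true; and (iii) for all x,y ∈ C and (k,≺) ∈ 𝒟_{x,y}, w⟦x−y≺k⟧ = u⟦x−y≺k⟧. Then for every set A of minterms, α_𝒟(⟦A⟧↑) ⊆ {w : there exists u ∈ A with (u,w) ∈ S_Up}; that is, the abstraction of the time successors of ⟦A⟧ is contained in the image of A under S_Up. -/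
variable {C : Type*}

variable [LinearOrder (Option C)]

/-- The set of time successors of a set of valuations. -/
def timeSucc {C : Type*} (S : Set (C → ℝ)) : Set (C → ℝ) :=
  {w | ∃ v ∈ S, ∃ d : ℝ, 0 ≤ d ∧ w = fun c => v c + d}

/-- The abstract time-successor relation `S_Up` on minterms: lower bounds on
clocks that fail in `u` fail in `w`, lower bounds that hold are preserved, and
all diagonal constraints between actual clocks are unchanged. -/
def SUp {C : Type*} [LinearOrder (Option C)] (𝒟 : AbsDom C)
    (u w : Minterm 𝒟) : Prop :=
  (∀ x : C, ∀ b ∈ 𝒟 (some x) none,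
      litVal 𝒟 u (some x) none b = false → litVal 𝒟 w (some x) none b = false) ∧
  (∀ y : C, ∀ b ∈ 𝒟 none (some y),
      litVal 𝒟 u none (some y) b = true → litVal 𝒟 w none (some y) b = true) ∧
  (∀ x y : C, ∀ b ∈ 𝒟 (some x) (some y),
      litVal 𝒟 w (some x) (some y) b = litVal 𝒟 u (some x) (some y) b)

lemma satB_inv_iff (e : ℝ) (b : Bnd) : satB e (bndInv b) ↔ ¬ satB (-e) b := by
  unfold satB bndInv
  rw [ofLex_toLex]
  cases hs : (ofLex b).2 <;> simp [hs] <;> constructor <;> intro h <;> linarith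

lemma satB_mono_s10 {e e' : ℝ} (h : e ≤ e') {b : Bnd} (hb : satB e' b) : satB e b := by
  unfold satB at *
  split at hb <;> simp_all <;> linarith

lemma litVal_iff {C : Type*} [LinearOrder (Option C)] (𝒟 : AbsDom C)
    (hsym : DomSym 𝒟) (u : Minterm 𝒟) (v : C → ℝ) (hv : v ∈ mtSem 𝒟 u)
    (x y : Option C) (hxy : x ≠ y) (b : Bnd) (hb : b ∈ 𝒟 x y) :
    (litVal 𝒟 u x y b = true ↔ satB (val0 v x - val0 v y) b) := by
  rcases lt_or_gt_of_ne hxy with h | h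
  · rw [litVal, dif_pos ⟨h, hb⟩]
    exact (hv.2 ⟨(x, y, b), h, hb⟩).symm
  · have hinv : bndInv b ∈ 𝒟 y x := by
      rw [hsym x y]; exact Finset.mem_image_of_mem _ hb
    rw [litVal, dif_neg (fun hc => absurd hc.1 (not_lt_of_gt h)),
      dif_pos ⟨h, hinv⟩]
    have h2 : satB (val0 v y - val0 v x) (bndInv b) ↔
        u ⟨(y, x, bndInv b), h, hinv⟩ = true := hv.2 ⟨(y, x, bndInv b), h, hinv⟩
    rw [satB_inv_iff, neg_sub] at h2
    rw [Bool.not_eq_true', ← not_not (a := satB (val0 v x - val0 v y) b), h2]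
    simp

/-- The abstraction of the time successors of `⟦A⟧` is contained in the image
of `A` under the relation `S_Up`. -/
theorem up_abstraction_sound {C : Type*} [LinearOrder (Option C)]
    (𝒟 : AbsDom C) (hsym : DomSym 𝒟) (A : Set (Minterm 𝒟)) :
    absF 𝒟 (timeSucc (setSem 𝒟 A)) ⊆ {w | ∃ u ∈ A, SUp 𝒟 u w} := by
  rintro w ⟨w', hw', v, hvA, d, hd, rfl⟩
  obtain ⟨u, huA, hvu⟩ : ∃ u ∈ A, v ∈ mtSem 𝒟 u := by
    simpa [setSem, Set.mem_iUnion] using hvA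
  refine ⟨u, huA, ?_, ?_, ?_⟩
  · intro x b hb hfalse
    rw [← Bool.not_eq_true] at hfalse ⊢
    rw [litVal_iff 𝒟 hsym w _ hw' _ _ (by simp) b hb]
    rw [litVal_iff 𝒟 hsym u v hvu _ _ (by simp) b hb] at hfalse
    simp only [val0, Option.elim] at *
    intro hc
    exact hfalse (satB_mono_s10 (by linarith) hc)
  · intro y b hb htrue
    rw [litVal_iff 𝒟 hsym w _ hw' _ _ (by simp) b hb]
    rw [litVal_iff 𝒟 hsym u v hvu _ _ (by simp) b hb] at htrue
    simp only [val0, Option.elim] at *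
    exact satB_mono_s10 (by linarith) htrue
  · intro x y b hb
    by_cases hxy : x = y
    · subst hxy
      simp [litVal, lt_irrefl]
    have hne : (some x : Option C) ≠ some y := by simpa using hxy
    rw [Bool.eq_iff_iff,
      litVal_iff 𝒟 hsym w _ hw' _ _ hne b hb,
      litVal_iff 𝒟 hsym u v hvu _ _ hne b hb]
    simp only [val0, Option.elim]
    constructor <;> intro h <;> [skip; skip] <;>
      · have : v x + d - (v y + d) = v x - v y := by ring
        first
        | (rw [this] at h; exact h)
        | (rw [← this] at h; exact h)
end
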